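/- Let (I, e, N, ᾱ, d) be a fusion algebra datum with polynomial growth of order s₀ with respect to a proper length function ℓ. Then there exist constants C > 0 and s > 0 such that for all finitely supported f, ξ : I → ℂ one has ‖f · ξ‖₂ ≤ C·‖f‖_{2,s}·‖ξ‖₂, where (f · ξ)(γ) := ∑_{α,β} f(α)·ξ(β)·N_{α,β}^γ, ‖ξ‖₂ := (∑_γ |ξ(γ)|²·d(γ)²)^{1/2}, and ‖f‖_{2,s} := (∑_α |f(α)|²·d(α)²·(1+ℓ(α))^{2s})^{1/2}. -/

import Mathlib

/-- A fusion algebra datum on an index set `I`: a unit `e`, structure constants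
`N`, a conjugation `bar`, and a dimension function `d`, satisfying finiteness
of fusion, the unit rules, Frobenius reciprocity and multiplicativity of `d`. -/
structure FusionData (I : Type*) where
  e : I
  N : I → I → I → ℕ
  bar : I → I
  d : I → ℝ
  N_fin : ∀ α β, (Function.support (N α β)).Finite
  bar_bar : ∀ α, bar (bar α) = α
  bar_e : bar e = e
  one_le_d : ∀ α, 1 ≤ d α
  d_bar : ∀ α, d (bar α) = d α
  N_unit_right : ∀ α, N α e α = 1
  N_unit_right' : ∀ α γ, γ ≠ α → N α e γ = 0
  N_unit_left : ∀ α, N e α α = 1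
  N_unit_left' : ∀ α γ, γ ≠ α → N e α γ = 0
  frob₁ : ∀ α β γ, N α β γ = N (bar α) γ β
  frob₂ : ∀ α β γ, N α β γ = N γ (bar β) α
  d_mul : ∀ α β, d α * d β = ∑ᶠ γ, (N α β γ : ℝ) * d γ

/-- A length function on a fusion algebra datum. -/
structure IsLength {I : Type*} (F : FusionData I) (ℓ : I → ℝ) : Prop where
  nonneg : ∀ α, 0 ≤ ℓ α
  map_e : ℓ F.e = 0
  map_bar : ∀ α, ℓ (F.bar α) = ℓ α
  subadd : ∀ α β γ, F.N α β γ ≠ 0 → ℓ γ ≤ ℓ α + ℓ β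

/-- A length function is proper if balls are finite and only `e` has length 0. -/
def IsProperLength {I : Type*} (F : FusionData I) (ℓ : I → ℝ) : Prop :=
  (∀ R : ℝ, 0 ≤ R → {α : I | ℓ α ≤ R}.Finite) ∧ ∀ α, ℓ α = 0 → α = F.e

/-- The fusion product `(f · ξ)(γ) = ∑_{α,β} f(α) ξ(β) N_{α,β}^γ`. -/
noncomputable def fmul {I : Type*} (F : FusionData I) (f ξ : I → ℂ) : I → ℂ :=
  fun γ => ∑ᶠ α, ∑ᶠ β, f α * ξ β * (F.N α β γ : ℂ)

/-- The weighted `ℓ²`-norm `‖ξ‖₂ = (∑_γ |ξ(γ)|² d(γ)²)^{1/2}`. -/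
noncomputable def norm2 {I : Type*} (F : FusionData I) (ξ : I → ℂ) : ℝ :=
  Real.sqrt (∑ᶠ γ, ‖ξ γ‖ ^ 2 * F.d γ ^ 2)


/-- The weighted norm `‖f‖_{2,s} = (∑_α |f(α)|² d(α)² (1+ℓ(α))^{2s})^{1/2}`. -/
noncomputable def norm2s {I : Type*} (F : FusionData I) (ℓ : I → ℝ) (s : ℝ)
    (f : I → ℂ) : ℝ :=
  Real.sqrt (∑ᶠ α, ‖f α‖ ^ 2 * F.d α ^ 2 * (1 + ℓ α) ^ (2 * s))

section Helpers

variable {I : Type*} (F : FusionData I)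

lemma FD.d_pos (α : I) : 0 < F.d α := lt_of_lt_of_le one_pos (F.one_le_d α)

lemma FD.Nd_fin (α β : I) :
    (Function.support fun γ => (F.N α β γ : ℝ) * F.d γ).Finite := by
  apply (F.N_fin α β).subset
  intro γ hγ
  simp only [Function.mem_support] at hγ ⊢
  intro h; apply hγ; simp [h]

lemma FD.d_e : F.d F.e = 1 := by
  have h := F.d_mul F.e F.e
  rw [finsum_eq_single _ F.e
    (fun γ hγ => by rw [F.N_unit_left' F.e γ hγ]; simp)] at h
  rw [F.N_unit_left F.e] at h
  have hp := FD.d_pos F F.e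
  have : F.d F.e * F.d F.e = 1 * F.d F.e := by rw [h]; push_cast; ring
  exact mul_right_cancel₀ (ne_of_gt hp) this

lemma FD.d_le {α β γ : I} (h : F.N α β γ ≠ 0) : F.d γ ≤ F.d α * F.d β := by
  classical
  have hfin := FD.Nd_fin F α β
  have hsub : (Function.support fun γ => (F.N α β γ : ℝ) * F.d γ) ⊆ ↑hfin.toFinset := by
    rw [Set.Finite.coe_toFinset]
  rw [F.d_mul α β, finsum_eq_sum_of_support_subset _ hsub]
  have hN : (1:ℝ) ≤ (F.N α β γ : ℝ) := by exact_mod_cast Nat.one_le_iff_ne_zero.2 h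
  have hmem : γ ∈ hfin.toFinset := by
    rw [Set.Finite.mem_toFinset, Function.mem_support]
    have hγ := FD.d_pos F γ
    exact ne_of_gt (by nlinarith)
  have hterm : F.d γ ≤ (F.N α β γ : ℝ) * F.d γ := by nlinarith [FD.d_pos F γ]
  refine hterm.trans (Finset.single_le_sum (f := fun γ => (F.N α β γ : ℝ) * F.d γ) ?_ hmem)
  intro i _
  have := FD.d_pos F i
  positivity

lemma FD.sum_Nd_right_le (α β : I) (T : Finset I) :
    ∑ γ ∈ T, (F.N α β γ : ℝ) * F.d γ ≤ F.d α * F.d β := by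
  classical
  have hfin := FD.Nd_fin F α β
  have hsub : (Function.support fun γ => (F.N α β γ : ℝ) * F.d γ) ⊆ ↑(T ∪ hfin.toFinset) := by
    intro x hx
    simp only [Finset.coe_union, Set.mem_union, Set.Finite.coe_toFinset]
    right; exact hx
  rw [F.d_mul α β, finsum_eq_sum_of_support_subset _ hsub]
  apply Finset.sum_le_sum_of_subset_of_nonneg Finset.subset_union_left
  intro i _ _
  have := FD.d_pos F i
  positivity

lemma FD.sum_Nd_left_le (α γ : I) (T : Finset I) :
    ∑ β ∈ T, (F.N α β γ : ℝ) * F.d β ≤ F.d α * F.d γ := by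
  have h1 : ∑ β ∈ T, (F.N α β γ : ℝ) * F.d β
      = ∑ β ∈ T, (F.N (F.bar α) γ β : ℝ) * F.d β := by
    apply Finset.sum_congr rfl; intro β _; rw [← F.frob₁]
  rw [h1]
  have := FD.sum_Nd_right_le F (F.bar α) γ T
  rwa [F.d_bar] at this

lemma FD.sum_Nd3_le (α β : I) (T : Finset I) :
    ∑ γ ∈ T, (F.N α β γ : ℝ) * F.d γ ^ 3 ≤ (F.d α * F.d β) ^ 3 := by
  have h1 : ∑ γ ∈ T, (F.N α β γ : ℝ) * F.d γ ^ 3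
      ≤ ∑ γ ∈ T, ((F.N α β γ : ℝ) * F.d γ) * (F.d α * F.d β) ^ 2 := by
    apply Finset.sum_le_sum
    intro γ _
    by_cases h : F.N α β γ = 0
    · simp [h]
    · have hd := FD.d_le F h
      have h0 := FD.d_pos F γ
      have hN : (0:ℝ) ≤ (F.N α β γ : ℝ) := by positivity
      have h2 : F.d γ ^ 2 ≤ (F.d α * F.d β) ^ 2 := by nlinarith
      calc (F.N α β γ : ℝ) * F.d γ ^ 3 = ((F.N α β γ : ℝ) * F.d γ) * F.d γ ^ 2 := by ring
        _ ≤ ((F.N α β γ : ℝ) * F.d γ) * (F.d α * F.d β) ^ 2 :=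
            mul_le_mul_of_nonneg_left h2 (by positivity)
  rw [← Finset.sum_mul] at h1
  refine h1.trans ?_
  have h2 := FD.sum_Nd_right_le F α β T
  have h3 : (0:ℝ) < (F.d α * F.d β) ^ 2 := by
    have := FD.d_pos F α; have := FD.d_pos F β; positivity
  nlinarith

lemma sum_inv_sq_le (M : ℕ) :
    ∑ n ∈ Finset.Icc 1 M, ((n:ℝ) ^ 2)⁻¹ ≤ 2 - 2 / ((M:ℝ) + 1) := by
  induction M with
  | zero => simp
  | succ M ih =>
    rw [Finset.sum_Icc_succ_top (by omega)]
    have hM : (0:ℝ) < (M:ℝ) + 1 := by positivity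
    have hM2 : (0:ℝ) < (M:ℝ) + 2 := by positivity
    have hcast : ((M + 1 : ℕ) : ℝ) = (M:ℝ) + 1 := by push_cast; ring
    rw [hcast]
    have he : (M:ℝ) + 1 + 1 = (M:ℝ) + 2 := by ring
    rw [he]
    have key : (((M:ℝ) + 1) ^ 2)⁻¹ ≤ 2 / ((M:ℝ) + 1) - 2 / ((M:ℝ) + 2) := by
      rw [div_sub_div _ _ (ne_of_gt hM) (ne_of_gt hM2)]
      rw [inv_eq_one_div, div_le_div_iff₀ (by positivity) (by positivity)]
      nlinarith
    linarith

end Helpers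
lemma key_sumbound {I : Type*} (F : FusionData I) (ℓ : I → ℝ) (hℓ : IsLength F ℓ)
    (hproper : IsProperLength F ℓ) (s₀ c : ℝ) (hs₀ : 0 < s₀) (hc : 0 < c)
    (hgrow : ∀ n : ℕ, 1 ≤ n →
      ∑ᶠ α ∈ {α : I | (n : ℝ) - 1 < ℓ α ∧ ℓ α ≤ n}, F.d α ^ 2 ≤ c * (n : ℝ) ^ s₀)
    (A : Finset I) :
    ∑ α ∈ A, F.d α ^ 2 * (1 + ℓ α) ^ (-(s₀ + 2)) ≤ 1 + 2 * c := by
  classical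
  set t : ℝ := s₀ + 2 with ht
  have hterm_nonneg : ∀ α : I, 0 ≤ F.d α ^ 2 * (1 + ℓ α) ^ (-t) := by
    intro α
    have h1 : (0:ℝ) < 1 + ℓ α := by have := hℓ.nonneg α; linarith
    positivity
  rw [← Finset.sum_filter_add_sum_filter_not A (fun α => ℓ α = 0)]
  have part1 : ∑ α ∈ A.filter (fun α => ℓ α = 0), F.d α ^ 2 * (1 + ℓ α) ^ (-t) ≤ 1 := by
    have hsub : A.filter (fun α => ℓ α = 0) ⊆ {F.e} := by
      intro α hα
      rw [Finset.mem_filter] at hα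
      rw [Finset.mem_singleton]
      exact hproper.2 α hα.2
    refine le_trans (Finset.sum_le_sum_of_subset_of_nonneg hsub
      (fun i _ _ => hterm_nonneg i)) ?_
    rw [Finset.sum_singleton, FD.d_e, hℓ.map_e]
    norm_num
  have part2 : ∑ α ∈ A.filter (fun α => ¬ ℓ α = 0), F.d α ^ 2 * (1 + ℓ α) ^ (-t) ≤ 2 * c := by
    set A' := A.filter (fun α => ¬ ℓ α = 0) with hA'
    have hpos : ∀ α ∈ A', 0 < ℓ α := by
      intro α hα
      rw [hA', Finset.mem_filter] at hα
      exact lt_of_le_of_ne (hℓ.nonneg α) (Ne.symm hα.2)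
    set nc : I → ℕ := fun α => ⌈ℓ α⌉₊ with hnc
    set M := A'.sup nc with hM
    have hmap : ∀ α ∈ A', nc α ∈ Finset.Icc 1 M := by
      intro α hα
      rw [Finset.mem_Icc]
      exact ⟨Nat.one_le_ceil_iff.2 (hpos α hα), Finset.le_sup hα⟩
    rw [← Finset.sum_fiberwise_of_maps_to hmap (fun α => F.d α ^ 2 * (1 + ℓ α) ^ (-t))]
    have fiber_bound : ∀ n ∈ Finset.Icc 1 M,
        ∑ α ∈ A'.filter (fun α => nc α = n), F.d α ^ 2 * (1 + ℓ α) ^ (-t)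
          ≤ c * ((n:ℝ) ^ 2)⁻¹ := by
      intro n hn
      rw [Finset.mem_Icc] at hn
      have hn1 : 1 ≤ n := hn.1
      have hnR : (1:ℝ) ≤ (n:ℝ) := by exact_mod_cast hn1
      have hnpos : (0:ℝ) < (n:ℝ) := by linarith
      -- shell
      have hshell : ({α : I | (n : ℝ) - 1 < ℓ α ∧ ℓ α ≤ n}).Finite :=
        (hproper.1 n (by linarith)).subset (fun α h => h.2)
      have hgrown := hgrow n hn1
      rw [← Set.Finite.coe_toFinset hshell, finsum_mem_coe_finset] at hgrown
      have hsub : A'.filter (fun α => nc α = n) ⊆ hshell.toFinset := by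
        intro α hα
        rw [Finset.mem_filter] at hα
        have hp := hpos α hα.1
        have hceil : ⌈ℓ α⌉₊ = n := hα.2
        rw [Set.Finite.mem_toFinset]
        constructor
        · by_contra hcon
          push_neg at hcon
          have : ⌈ℓ α⌉₊ ≤ n - 1 := by
            rw [Nat.ceil_le]
            have : ((n - 1 : ℕ) : ℝ) = (n:ℝ) - 1 := by
              have : (1:ℕ) ≤ n := hn1
              push_cast [Nat.cast_sub this]
              ring
            rw [this]
            exact hcon
          omega
        · calc ℓ α ≤ (⌈ℓ α⌉₊ : ℝ) := Nat.le_ceil _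
            _ = (n : ℝ) := by rw [hceil]
      have hd2 : ∑ α ∈ A'.filter (fun α => nc α = n), F.d α ^ 2 ≤ c * (n:ℝ) ^ s₀ := by
        refine le_trans (Finset.sum_le_sum_of_subset_of_nonneg hsub ?_) hgrown
        intro i _ _
        have := FD.d_pos F i
        positivity
      have hpt : ∀ α ∈ A'.filter (fun α => nc α = n),
          F.d α ^ 2 * (1 + ℓ α) ^ (-t) ≤ F.d α ^ 2 * (n:ℝ) ^ (-t) := by
        intro α hα
        rw [Finset.mem_filter] at hα
        have hle : (n:ℝ) ≤ 1 + ℓ α := by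
          have h1 := Nat.ceil_lt_add_one (hℓ.nonneg α)
          have h2 : ((nc α : ℕ) : ℝ) ≤ ℓ α + 1 := le_of_lt h1
          have : ((n:ℕ):ℝ) ≤ ℓ α + 1 := by rw [← hα.2]; exact h2
          linarith
        have hrp : (1 + ℓ α) ^ (-t) ≤ (n:ℝ) ^ (-t) :=
          Real.rpow_le_rpow_of_nonpos hnpos hle (by rw [ht]; linarith)
        have hd2' : (0:ℝ) ≤ F.d α ^ 2 := by positivity
        exact mul_le_mul_of_nonneg_left hrp hd2'
      calc ∑ α ∈ A'.filter (fun α => nc α = n), F.d α ^ 2 * (1 + ℓ α) ^ (-t)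
          ≤ ∑ α ∈ A'.filter (fun α => nc α = n), F.d α ^ 2 * (n:ℝ) ^ (-t) :=
            Finset.sum_le_sum hpt
        _ = (∑ α ∈ A'.filter (fun α => nc α = n), F.d α ^ 2) * (n:ℝ) ^ (-t) := by
            rw [Finset.sum_mul]
        _ ≤ (c * (n:ℝ) ^ s₀) * (n:ℝ) ^ (-t) := by
            apply mul_le_mul_of_nonneg_right hd2
            positivity
        _ = c * ((n:ℝ) ^ s₀ * (n:ℝ) ^ (-t)) := by ring
        _ = c * ((n:ℝ) ^ 2)⁻¹ := by
            rw [← Real.rpow_add hnpos]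
            have : s₀ + -t = -(2:ℝ) := by rw [ht]; ring
            rw [this, Real.rpow_neg (le_of_lt hnpos)]
            congr 1
            rw [show ((2:ℝ)) = ((2:ℕ):ℝ) by norm_num, Real.rpow_natCast]
      done
    calc ∑ n ∈ Finset.Icc 1 M, ∑ α ∈ A'.filter (fun α => nc α = n),
            F.d α ^ 2 * (1 + ℓ α) ^ (-t)
        ≤ ∑ n ∈ Finset.Icc 1 M, c * ((n:ℝ) ^ 2)⁻¹ := Finset.sum_le_sum fiber_bound
      _ = c * ∑ n ∈ Finset.Icc 1 M, ((n:ℝ) ^ 2)⁻¹ := by rw [Finset.mul_sum]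
      _ ≤ c * 2 := by
          apply mul_le_mul_of_nonneg_left _ (le_of_lt hc)
          have := sum_inv_sq_le M
          have h2 : (0:ℝ) < (M:ℝ) + 1 := by positivity
          have : 2 - 2 / ((M:ℝ) + 1) ≤ 2 := by
            have : 0 ≤ 2 / ((M:ℝ) + 1) := by positivity
            linarith
          linarith [sum_inv_sq_le M]
      _ = 2 * c := by ring
  linarith
lemma weighted_CS {ι : Type*} (T : Finset ι) (w a q : ι → ℝ)
    (hw : ∀ i ∈ T, 0 ≤ w i) (hq : ∀ i ∈ T, 0 < q i) :
    (∑ i ∈ T, w i * a i) ^ 2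
      ≤ (∑ i ∈ T, w i * q i) * (∑ i ∈ T, w i * a i ^ 2 / q i) := by
  have h1 : ∑ i ∈ T, w i * a i
      = ∑ i ∈ T, (Real.sqrt (w i) * Real.sqrt (q i))
          * (Real.sqrt (w i) * a i / Real.sqrt (q i)) := by
    apply Finset.sum_congr rfl
    intro i hi
    have hsq : Real.sqrt (q i) ≠ 0 := ne_of_gt (Real.sqrt_pos.2 (hq i hi))
    calc w i * a i = ((Real.sqrt (w i) * Real.sqrt (w i)) * a i) * 1 := by
          rw [Real.mul_self_sqrt (hw i hi)]; ring
      _ = ((Real.sqrt (w i) * Real.sqrt (w i)) * a i) * (Real.sqrt (q i) / Real.sqrt (q i)) := by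
          rw [div_self hsq]
      _ = (Real.sqrt (w i) * Real.sqrt (q i)) * (Real.sqrt (w i) * a i / Real.sqrt (q i)) := by
          ring
  rw [h1]
  refine le_trans (Finset.sum_mul_sq_le_sq_mul_sq T _ _) (le_of_eq ?_)
  congr 1
  · apply Finset.sum_congr rfl
    intro i hi
    rw [mul_pow, Real.sq_sqrt (hw i hi), Real.sq_sqrt (le_of_lt (hq i hi))]
  · apply Finset.sum_congr rfl
    intro i hi
    rw [div_pow, mul_pow, Real.sq_sqrt (hw i hi), Real.sq_sqrt (le_of_lt (hq i hi))]
theorem stmt_9 {I : Type*} (F : FusionData I) (ℓ : I → ℝ) (hℓ : IsLength F ℓ)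
    (hproper : IsProperLength F ℓ)
    (s₀ c : ℝ) (hs₀ : 0 < s₀) (hc : 0 < c)
    (hgrow : ∀ n : ℕ, 1 ≤ n →
      ∑ᶠ α ∈ {α : I | (n : ℝ) - 1 < ℓ α ∧ ℓ α ≤ n}, F.d α ^ 2 ≤ c * (n : ℝ) ^ s₀) :
    ∃ C : ℝ, 0 < C ∧ ∃ s : ℝ, 0 < s ∧
      ∀ f ξ : I → ℂ, (Function.support f).Finite → (Function.support ξ).Finite →
        norm2 F (fmul F f ξ) ≤ C * norm2s F ℓ s f * norm2 F ξ := by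
  classical
  refine ⟨Real.sqrt (1 + 2 * c), Real.sqrt_pos.2 (by linarith), (s₀ + 2) / 2,
    by linarith, ?_⟩
  intro f ξ hf hξ
  set s : ℝ := (s₀ + 2) / 2 with hs
  have h2s : 2 * s = s₀ + 2 := by rw [hs]; ring
  set A := hf.toFinset with hA
  set B := hξ.toFinset with hB
  set Γ := A.biUnion (fun α => B.biUnion (fun β => (F.N_fin α β).toFinset)) with hΓ
  obtain ⟨x, hx⟩ : ∃ x : I → I → ℝ, x = fun α γ => ∑ β ∈ B, ‖ξ β‖ * (F.N α β γ : ℝ) :=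
    ⟨_, rfl⟩
  obtain ⟨L, hL⟩ : ∃ y : ℝ, y = ∑ α ∈ A, ‖f α‖ * F.d α ^ 2 := ⟨_, rfl⟩
  obtain ⟨Q, hQ⟩ : ∃ y : ℝ, y = ∑ β ∈ B, ‖ξ β‖ ^ 2 * F.d β ^ 2 := ⟨_, rfl⟩
  obtain ⟨P, hP⟩ : ∃ y : ℝ, y = ∑ α ∈ A, ‖f α‖ ^ 2 * F.d α ^ 2 * (1 + ℓ α) ^ (2 * s) :=
    ⟨_, rfl⟩
  obtain ⟨S, hS⟩ : ∃ y : ℝ, y = ∑ γ ∈ Γ, ‖fmul F f ξ γ‖ ^ 2 * F.d γ ^ 2 := ⟨_, rfl⟩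
  have hQ0 : 0 ≤ Q := by
    rw [hQ]; apply Finset.sum_nonneg; intro β _; positivity
  have hP0 : 0 ≤ P := by
    rw [hP]; apply Finset.sum_nonneg; intro α _
    have h1 : (0:ℝ) < 1 + ℓ α := by have := hℓ.nonneg α; linarith
    positivity
  have hL0 : 0 ≤ L := by
    rw [hL]; apply Finset.sum_nonneg; intro α _; positivity
  -- fmul as a finite double sum
  have hfmul_eq : ∀ γ, fmul F f ξ γ = ∑ α ∈ A, ∑ β ∈ B, f α * ξ β * (F.N α β γ : ℂ) := by
    intro γ
    show (∑ᶠ α, ∑ᶠ β, f α * ξ β * (F.N α β γ : ℂ)) = _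
    have hinner : ∀ α, (∑ᶠ β, f α * ξ β * (F.N α β γ : ℂ))
        = ∑ β ∈ B, f α * ξ β * (F.N α β γ : ℂ) := by
      intro α
      apply finsum_eq_sum_of_support_subset
      intro β hβ
      simp only [Function.mem_support] at hβ
      rw [hB]
      show β ∈ (hξ.toFinset : Set I)
      rw [Set.Finite.coe_toFinset]
      intro h0
      exact hβ (by rw [h0, mul_zero, zero_mul])
    rw [finsum_congr hinner]
    apply finsum_eq_sum_of_support_subset
    intro α hα
    simp only [Function.mem_support] at hα
    rw [hA]
    show α ∈ (hf.toFinset : Set I)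
    rw [Set.Finite.coe_toFinset]
    intro h0
    apply hα
    apply Finset.sum_eq_zero
    intro β _
    rw [h0, zero_mul, zero_mul]
  -- the three norms as finite sums
  have hnorm_fmul : norm2 F (fmul F f ξ) = Real.sqrt S := by
    rw [norm2, hS]
    congr 1
    apply finsum_eq_sum_of_support_subset
    intro γ hγ
    simp only [Function.mem_support] at hγ
    by_contra hcon
    apply hγ
    have hzero : fmul F f ξ γ = 0 := by
      rw [hfmul_eq γ]
      apply Finset.sum_eq_zero
      intro α hαA
      apply Finset.sum_eq_zero
      intro β hβB
      have hN0 : F.N α β γ = 0 := by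
        by_contra hN
        apply hcon
        rw [hΓ, Finset.mem_coe, Finset.mem_biUnion]
        exact ⟨α, hαA, Finset.mem_biUnion.2 ⟨β, hβB,
          (F.N_fin α β).mem_toFinset.2 hN⟩⟩
      rw [hN0]
      simp
    rw [hzero]
    simp
  have hnorm_f : norm2s F ℓ s f = Real.sqrt P := by
    rw [norm2s, hP]
    congr 1
    apply finsum_eq_sum_of_support_subset
    intro α hα
    simp only [Function.mem_support] at hα
    rw [hA]
    show α ∈ (hf.toFinset : Set I)
    rw [Set.Finite.coe_toFinset]
    intro h0
    exact hα (by rw [h0]; simp)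
  have hnorm_ξ : norm2 F ξ = Real.sqrt Q := by
    rw [norm2, hQ]
    congr 1
    apply finsum_eq_sum_of_support_subset
    intro β hβ
    simp only [Function.mem_support] at hβ
    rw [hB]
    show β ∈ (hξ.toFinset : Set I)
    rw [Set.Finite.coe_toFinset]
    intro h0
    exact hβ (by rw [h0]; simp)
  -- pointwise bound on fmul
  have hbound1 : ∀ γ, ‖fmul F f ξ γ‖ ≤ ∑ α ∈ A, ‖f α‖ * x α γ := by
    intro γ
    rw [hfmul_eq γ]
    refine le_trans (norm_sum_le _ _) (Finset.sum_le_sum ?_)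
    intro α _
    refine le_trans (norm_sum_le _ _) (le_of_eq ?_)
    simp only [hx]
    rw [Finset.mul_sum]
    apply Finset.sum_congr rfl
    intro β _
    rw [norm_mul, norm_mul, Complex.norm_natCast]
    ring
  have hCS2 : ∀ α γ, x α γ ^ 2
      ≤ (F.d α * F.d γ) * ∑ β ∈ B, (F.N α β γ : ℝ) * ‖ξ β‖ ^ 2 / F.d β := by
    intro α γ
    have hxe : x α γ = ∑ β ∈ B, (F.N α β γ : ℝ) * ‖ξ β‖ := by
      simp only [hx]
      apply Finset.sum_congr rfl
      intro β _
      ring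
    have hw : ∀ β ∈ B, (0:ℝ) ≤ (F.N α β γ : ℝ) := by intro β _; positivity
    have h := weighted_CS B (fun β => (F.N α β γ : ℝ)) (fun β => ‖ξ β‖)
      (fun β => F.d β) hw (fun β _ => FD.d_pos F β)
    rw [hxe]
    refine le_trans h (mul_le_mul_of_nonneg_right (FD.sum_Nd_left_le F α γ B) ?_)
    apply Finset.sum_nonneg
    intro β _
    have := FD.d_pos F β
    positivity
  have hB4 : ∀ α, ∑ γ ∈ Γ, F.d γ ^ 2 * x α γ ^ 2 ≤ F.d α ^ 4 * Q := by
    intro α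
    have step1 : ∑ γ ∈ Γ, F.d γ ^ 2 * x α γ ^ 2
        ≤ ∑ γ ∈ Γ, ∑ β ∈ B, (F.d α * (‖ξ β‖ ^ 2 / F.d β)) * ((F.N α β γ : ℝ) * F.d γ ^ 3) := by
      apply Finset.sum_le_sum
      intro γ _
      refine le_trans (mul_le_mul_of_nonneg_left (hCS2 α γ) (by have := FD.d_pos F γ; positivity)) (le_of_eq ?_)
      rw [Finset.mul_sum, Finset.mul_sum]
      apply Finset.sum_congr rfl
      intro β _
      have hdβ := FD.d_pos F β
      field_simp
    refine le_trans step1 ?_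
    rw [Finset.sum_comm]
    have step2 : ∀ β ∈ B,
        ∑ γ ∈ Γ, (F.d α * (‖ξ β‖ ^ 2 / F.d β)) * ((F.N α β γ : ℝ) * F.d γ ^ 3)
          ≤ (F.d α * (‖ξ β‖ ^ 2 / F.d β)) * (F.d α * F.d β) ^ 3 := by
      intro β _
      rw [← Finset.mul_sum]
      apply mul_le_mul_of_nonneg_left (FD.sum_Nd3_le F α β Γ)
      have := FD.d_pos F β
      have := FD.d_pos F α
      positivity
    refine le_trans (Finset.sum_le_sum step2) (le_of_eq ?_)
    rw [hQ, Finset.mul_sum]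
    apply Finset.sum_congr rfl
    intro β _
    have := FD.d_pos F β
    field_simp
  have hSLQ : S ≤ L ^ 2 * Q := by
    have st1 : S ≤ ∑ γ ∈ Γ, (∑ α ∈ A, ‖f α‖ * x α γ) ^ 2 * F.d γ ^ 2 := by
      rw [hS]
      apply Finset.sum_le_sum
      intro γ _
      apply mul_le_mul_of_nonneg_right _ (by have := FD.d_pos F γ; positivity)
      exact pow_le_pow_left₀ (norm_nonneg _) (hbound1 γ) 2
    have st2 : ∀ γ, (∑ α ∈ A, ‖f α‖ * x α γ) ^ 2
        ≤ L * ∑ α ∈ A, ‖f α‖ * x α γ ^ 2 / F.d α ^ 2 := by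
      intro γ
      have h := weighted_CS A (fun α => ‖f α‖) (fun α => x α γ)
        (fun α => F.d α ^ 2) (fun α _ => norm_nonneg _)
        (fun α _ => by have := FD.d_pos F α; positivity)
      rw [hL]
      exact h
    have st3 : ∑ γ ∈ Γ, (∑ α ∈ A, ‖f α‖ * x α γ) ^ 2 * F.d γ ^ 2
        ≤ L * ∑ α ∈ A, (‖f α‖ / F.d α ^ 2) * ∑ γ ∈ Γ, F.d γ ^ 2 * x α γ ^ 2 := by
      calc ∑ γ ∈ Γ, (∑ α ∈ A, ‖f α‖ * x α γ) ^ 2 * F.d γ ^ 2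
          ≤ ∑ γ ∈ Γ, (L * ∑ α ∈ A, ‖f α‖ * x α γ ^ 2 / F.d α ^ 2) * F.d γ ^ 2 := by
            apply Finset.sum_le_sum
            intro γ _
            exact mul_le_mul_of_nonneg_right (st2 γ) (by positivity)
        _ = ∑ γ ∈ Γ, (L * ∑ α ∈ A, (‖f α‖ / F.d α ^ 2) * (F.d γ ^ 2 * x α γ ^ 2)) := by
            apply Finset.sum_congr rfl
            intro γ _
            have hinner : (∑ α ∈ A, ‖f α‖ * x α γ ^ 2 / F.d α ^ 2) * F.d γ ^ 2
                = ∑ α ∈ A, (‖f α‖ / F.d α ^ 2) * (F.d γ ^ 2 * x α γ ^ 2) := by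
              rw [Finset.sum_mul]
              apply Finset.sum_congr rfl
              intro α _
              ring
            rw [mul_assoc, hinner]
        _ = L * ∑ α ∈ A, (‖f α‖ / F.d α ^ 2) * ∑ γ ∈ Γ, F.d γ ^ 2 * x α γ ^ 2 := by
            rw [← Finset.mul_sum]
            congr 1
            rw [Finset.sum_comm]
            apply Finset.sum_congr rfl
            intro α _
            rw [Finset.mul_sum]
    have st4 : ∑ α ∈ A, (‖f α‖ / F.d α ^ 2) * ∑ γ ∈ Γ, F.d γ ^ 2 * x α γ ^ 2
        ≤ ∑ α ∈ A, (‖f α‖ / F.d α ^ 2) * (F.d α ^ 4 * Q) := by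
      apply Finset.sum_le_sum
      intro α _
      apply mul_le_mul_of_nonneg_left (hB4 α)
      have := FD.d_pos F α
      positivity
    have st5 : ∑ α ∈ A, (‖f α‖ / F.d α ^ 2) * (F.d α ^ 4 * Q) = L * Q := by
      rw [hL, Finset.sum_mul]
      apply Finset.sum_congr rfl
      intro α _
      have := FD.d_pos F α
      field_simp
    calc S ≤ ∑ γ ∈ Γ, (∑ α ∈ A, ‖f α‖ * x α γ) ^ 2 * F.d γ ^ 2 := st1
      _ ≤ L * ∑ α ∈ A, (‖f α‖ / F.d α ^ 2) * ∑ γ ∈ Γ, F.d γ ^ 2 * x α γ ^ 2 := st3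
      _ ≤ L * ∑ α ∈ A, (‖f α‖ / F.d α ^ 2) * (F.d α ^ 4 * Q) :=
          mul_le_mul_of_nonneg_left st4 hL0
      _ = L * (L * Q) := by rw [st5]
      _ = L ^ 2 * Q := by ring
  have h1pos : ∀ α : I, (0:ℝ) < 1 + ℓ α := fun α => by have := hℓ.nonneg α; linarith
  have hL2 : L ^ 2 ≤ (1 + 2 * c) * P := by
    have hLsplit : L = ∑ α ∈ A,
        (‖f α‖ * F.d α * (1 + ℓ α) ^ s) * (F.d α * (1 + ℓ α) ^ (-s)) := by
      rw [hL]
      apply Finset.sum_congr rfl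
      intro α _
      have hone : (1 + ℓ α) ^ s * (1 + ℓ α) ^ (-s) = 1 := by
        rw [← Real.rpow_add (h1pos α)]
        simp
      calc ‖f α‖ * F.d α ^ 2
          = (‖f α‖ * F.d α ^ 2) * ((1 + ℓ α) ^ s * (1 + ℓ α) ^ (-s)) := by
            rw [hone, mul_one]
        _ = (‖f α‖ * F.d α * (1 + ℓ α) ^ s) * (F.d α * (1 + ℓ α) ^ (-s)) := by ring
    rw [hLsplit]
    refine le_trans (Finset.sum_mul_sq_le_sq_mul_sq A _ _) ?_
    have e1 : ∑ α ∈ A, (‖f α‖ * F.d α * (1 + ℓ α) ^ s) ^ 2 = P := by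
      rw [hP]
      apply Finset.sum_congr rfl
      intro α _
      have hpow : ((1 + ℓ α) ^ s) ^ 2 = (1 + ℓ α) ^ (2 * s) := by
        rw [← Real.rpow_natCast ((1 + ℓ α) ^ s) 2,
          ← Real.rpow_mul (le_of_lt (h1pos α))]
        congr 1
        push_cast
        ring
      rw [mul_pow, mul_pow, hpow]
    have e2 : ∑ α ∈ A, (F.d α * (1 + ℓ α) ^ (-s)) ^ 2 ≤ 1 + 2 * c := by
      have he : ∀ α ∈ A, (F.d α * (1 + ℓ α) ^ (-s)) ^ 2
          = F.d α ^ 2 * (1 + ℓ α) ^ (-(s₀ + 2)) := by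
        intro α _
        rw [mul_pow]
        congr 1
        rw [← Real.rpow_natCast ((1 + ℓ α) ^ (-s)) 2,
          ← Real.rpow_mul (le_of_lt (h1pos α))]
        congr 1
        have := h2s
        push_cast
        linarith
      rw [Finset.sum_congr rfl he]
      exact key_sumbound F ℓ hℓ hproper s₀ c hs₀ hc hgrow A
    calc (∑ α ∈ A, (‖f α‖ * F.d α * (1 + ℓ α) ^ s) ^ 2)
          * ∑ α ∈ A, (F.d α * (1 + ℓ α) ^ (-s)) ^ 2
        ≤ P * (1 + 2 * c) := by
          rw [e1]
          exact mul_le_mul_of_nonneg_left e2 hP0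
      _ = (1 + 2 * c) * P := by ring
  rw [hnorm_fmul, hnorm_f, hnorm_ξ]
  have hfinal : S ≤ (1 + 2 * c) * P * Q := by
    calc S ≤ L ^ 2 * Q := hSLQ
      _ ≤ ((1 + 2 * c) * P) * Q := mul_le_mul_of_nonneg_right hL2 hQ0
      _ = (1 + 2 * c) * P * Q := by ring
  calc Real.sqrt S ≤ Real.sqrt ((1 + 2 * c) * P * Q) := Real.sqrt_le_sqrt hfinal
    _ = Real.sqrt (1 + 2 * c) * Real.sqrt P * Real.sqrt Q := by
        rw [Real.sqrt_mul (mul_nonneg (by linarith : (0:ℝ) ≤ 1 + 2 * c) hP0),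
          Real.sqrt_mul (by linarith : (0:ℝ) ≤ 1 + 2 * c)]
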